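/- Let K be an algebraically closed field with a valuation v : K → ℝ ∪ {∞} whose value group is divisible (e.g. the field of Puiseux series over ℂ with the order valuation). Fix ξ ∈ K and α ∈ ℝ, let B = {η ∈ K : v(η − ξ) ≥ α}, and define ν(f) = inf{v(f(η)) : η ∈ B} for f ∈ K[X]. Then ν is multiplicative: ν(fg) = ν(f) + ν(g) for all f, g ∈ K[X]. In particular ν is a valuation on K[X]. -/

import Mathlib

/-- The Berkovich-type function on `K[X]` obtained by taking the infimum of `v(f(η))` over the
closed ball `B = {η : v(η - ξ) ≥ α}` of center `ξ` and radius `α`.  Values are taken in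
`ℝ ∪ {∞}`, realized as `EReal`; the infimum of the empty set is `∞ = ⊤`. -/
noncomputable def ballInf {K : Type*} [Field K] (v : K → EReal) (ξ : K) (α : ℝ) :
    Polynomial K → EReal :=
  fun f => sInf {r : EReal | ∃ η : K, (α : EReal) ≤ v (η - ξ) ∧ r = v (Polynomial.eval η f)}

open Polynomial

namespace Stmt6

variable {K : Type*} [Field K]

section Basic

variable {v : K → EReal}

lemma exists_real {x : EReal} (hb : x ≠ ⊥) (ht : x ≠ ⊤) : ∃ r : ℝ, x = (r : EReal) := by
  lift x to ℝ using ⟨ht, hb⟩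
  exact ⟨x, rfl⟩

lemma vne_top (hzero : ∀ a, v a = ⊤ ↔ a = 0) {a : K} (ha : a ≠ 0) : v a ≠ ⊤ := by
  intro h; exact ha ((hzero a).1 h)

lemma vreal (hvbot : ∀ a, v a ≠ ⊥) (hzero : ∀ a, v a = ⊤ ↔ a = 0) {a : K} (ha : a ≠ 0) :
    ∃ r : ℝ, v a = (r : EReal) :=
  exists_real (hvbot a) (vne_top hzero ha)

lemma vone (hvbot : ∀ a, v a ≠ ⊥) (hmul : ∀ a b, v (a * b) = v a + v b)
    (hzero : ∀ a, v a = ⊤ ↔ a = 0) : v (1 : K) = 0 := by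
  obtain ⟨r, hr⟩ := vreal hvbot hzero (one_ne_zero (α := K))
  have h := hmul 1 1
  rw [one_mul, hr, ← EReal.coe_add] at h
  have : r = r + r := EReal.coe_eq_coe_iff.1 h
  have : r = 0 := by linarith
  rw [hr, this, EReal.coe_zero]

lemma vneg (hvbot : ∀ a, v a ≠ ⊥) (hmul : ∀ a b, v (a * b) = v a + v b)
    (hzero : ∀ a, v a = ⊤ ↔ a = 0) (a : K) : v (-a) = v a := by
  have hm1 : v (-1 : K) = 0 := by
    obtain ⟨r, hr⟩ := vreal hvbot hzero (neg_ne_zero.2 (one_ne_zero (α := K)))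
    have h := hmul (-1) (-1)
    rw [neg_mul_neg, one_mul, vone hvbot hmul hzero, hr, ← EReal.coe_add] at h
    have : (0 : ℝ) = r + r := EReal.coe_eq_coe_iff.1 h
    have : r = 0 := by linarith
    rw [hr, this, EReal.coe_zero]
  calc v (-a) = v ((-1) * a) := by ring_nf
    _ = v (-1 : K) + v a := hmul _ _
    _ = v a := by rw [hm1, zero_add]

lemma vadd_eq_min (hvbot : ∀ a, v a ≠ ⊥) (hmul : ∀ a b, v (a * b) = v a + v b)
    (hadd : ∀ a b, min (v a) (v b) ≤ v (a + b)) (hzero : ∀ a, v a = ⊤ ↔ a = 0)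
    {a b : K} (hne : v a ≠ v b) : v (a + b) = min (v a) (v b) := by
  -- wlog v a < v b
  rcases hne.lt_or_gt with h | h
  · refine le_antisymm ?_ (hadd a b)
    rw [min_eq_left h.le]
    by_contra hlt
    push_neg at hlt
    have h2 : v a = v ((a + b) + (-b)) := by ring_nf
    have := hadd (a + b) (-b)
    rw [← h2, vneg hvbot hmul hzero] at this
    have : min (v (a + b)) (v b) ≤ v a := this
    rcases min_le_iff.1 this with h3 | h3
    · exact absurd h3 (not_le.2 hlt)
    · exact absurd h3 (not_le.2 h)
  · refine le_antisymm ?_ (hadd a b)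
    rw [min_eq_right h.le]
    by_contra hlt
    push_neg at hlt
    have h2 : v b = v ((a + b) + (-a)) := by ring_nf
    have := hadd (a + b) (-a)
    rw [← h2, vneg hvbot hmul hzero] at this
    rcases min_le_iff.1 this with h3 | h3
    · exact absurd h3 (not_le.2 hlt)
    · exact absurd h3 (not_le.2 h)

lemma vprod (hvbot : ∀ a, v a ≠ ⊥) (hmul : ∀ a b, v (a * b) = v a + v b)
    (hzero : ∀ a, v a = ⊤ ↔ a = 0) (m : Multiset K) : v m.prod = (m.map v).sum := by
  induction m using Multiset.induction with
  | empty => simpa using vone hvbot hmul hzero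
  | cons a s ih => simp [hmul, ih]

end Basic
variable {K : Type*} [Field K] {v : K → EReal}

lemma vpow (hvbot : ∀ a, v a ≠ ⊥) (hmul : ∀ a b, v (a * b) = v a + v b)
    (hzero : ∀ a, v a = ⊤ ↔ a = 0) {b : K} {δ : ℝ} (hb : v b = (δ : EReal)) (n : ℕ) :
    v (b ^ n) = (((n : ℝ) * δ : ℝ) : EReal) := by
  induction n with
  | zero => simpa using vone hvbot hmul hzero
  | succ n ih =>
    rw [pow_succ, hmul, ih, hb, ← EReal.coe_add]
    congr 1
    push_cast
    ring

lemma vinv (hvbot : ∀ a, v a ≠ ⊥) (hmul : ∀ a b, v (a * b) = v a + v b)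
    (hzero : ∀ a, v a = ⊤ ↔ a = 0) {b : K} {r : ℝ} (hb : v b = (r : EReal)) :
    v b⁻¹ = ((-r : ℝ) : EReal) := by
  have hb0 : b ≠ 0 := by
    intro h; rw [h, (hzero 0).2 rfl] at hb; exact (EReal.coe_ne_top r) hb.symm
  obtain ⟨s, hs⟩ := vreal hvbot hzero (inv_ne_zero hb0)
  have h := hmul b b⁻¹
  rw [mul_inv_cancel₀ hb0, vone hvbot hmul hzero, hb, hs, ← EReal.coe_add] at h
  have : (0 : ℝ) = r + s := by exact_mod_cast h
  have : s = -r := by linarith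
  rw [hs, this]

lemma vzpow (hvbot : ∀ a, v a ≠ ⊥) (hmul : ∀ a b, v (a * b) = v a + v b)
    (hzero : ∀ a, v a = ⊤ ↔ a = 0) {b : K} {δ : ℝ} (hb : v b = (δ : EReal)) (k : ℤ) :
    v (b ^ k) = (((k : ℝ) * δ : ℝ) : EReal) := by
  cases k with
  | ofNat n => rw [Int.ofNat_eq_natCast, zpow_natCast, vpow hvbot hmul hzero hb]; norm_num
  | negSucc n =>
    rw [zpow_negSucc, vinv hvbot hmul hzero (vpow hvbot hmul hzero hb (n + 1))]
    congr 1
    push_cast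
    ring

lemma veval (hvbot : ∀ a, v a ≠ ⊥) (hmul : ∀ a b, v (a * b) = v a + v b)
    (hzero : ∀ a, v a = ⊤ ↔ a = 0) [IsAlgClosed K] (f : K[X]) (η : K) :
    v (f.eval η) = v f.leadingCoeff + ((f.roots).map fun a => v (η - a)).sum := by
  conv_lhs => rw [(IsAlgClosed.splits f).eq_prod_roots]
  rw [eval_mul, eval_C, hmul, eval_multiset_prod, Multiset.map_map,
    vprod hvbot hmul hzero, Multiset.map_map]
  congr 2
  ext a
  simp

noncomputable def M (v : K → EReal) (ξ : K) (α : ℝ) (f : K[X]) : EReal :=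
  v f.leadingCoeff + ((f.roots).map fun a => min (α : EReal) (v (ξ - a))).sum

lemma nsmul_top {m : ℕ} (hm : 0 < m) : m • (⊤ : EReal) = ⊤ := by
  induction m with
  | zero => omega
  | succ k ih =>
    rcases Nat.eq_zero_or_pos k with hk | hk
    · subst hk; simp
    · rw [succ_nsmul, ih hk]; simp

lemma ereal_sum_ne_bot {m : Multiset EReal} (h : ∀ x ∈ m, x ≠ ⊥) : m.sum ≠ ⊥ := by
  induction m using Multiset.induction with
  | empty => simp
  | cons a s ih =>
    rw [Multiset.sum_cons]
    intro hc
    rcases EReal.add_eq_bot_iff.1 hc with h1 | h1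
    · exact h a (Multiset.mem_cons_self a s) h1
    · exact ih (fun x hx => h x (Multiset.mem_cons_of_mem hx)) h1

lemma ereal_le_of_forall_add {x y : EReal} (hb : x ≠ ⊥) (ht : x ≠ ⊤)
    (H : ∀ ε : ℝ, 0 < ε → y ≤ x + (ε : EReal)) : y ≤ x := by
  lift x to ℝ using ⟨ht, hb⟩
  by_contra hc
  push_neg at hc
  obtain ⟨s, hs1, hs2⟩ := EReal.lt_iff_exists_real_btwn.1 hc
  have := H (s - x) (by exact_mod_cast sub_pos.2 (EReal.coe_lt_coe_iff.1 hs1))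
  rw [← EReal.coe_add] at this
  have : y ≤ ((s : ℝ) : EReal) := by simpa using this
  exact absurd (lt_of_le_of_lt this hs2) (lt_irrefl y)

variable [IsAlgClosed K]

lemma min_le_vsub (hadd : ∀ a b, min (v a) (v b) ≤ v (a + b)) {ξ η : K} {α : ℝ}
    (hη : (α : EReal) ≤ v (η - ξ)) (a : K) :
    min (α : EReal) (v (ξ - a)) ≤ v (η - a) := by
  have h : η - a = (η - ξ) + (ξ - a) := by ring
  calc min (α : EReal) (v (ξ - a)) ≤ min (v (η - ξ)) (v (ξ - a)) := min_le_min hη le_rfl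
    _ ≤ v ((η - ξ) + (ξ - a)) := hadd _ _
    _ = v (η - a) := by rw [← h]

lemma M_le_eval (hvbot : ∀ a, v a ≠ ⊥) (hmul : ∀ a b, v (a * b) = v a + v b)
    (hadd : ∀ a b, min (v a) (v b) ≤ v (a + b)) (hzero : ∀ a, v a = ⊤ ↔ a = 0)
    (ξ : K) (α : ℝ) (f : K[X]) {η : K} (hη : (α : EReal) ≤ v (η - ξ)) :
    M v ξ α f ≤ v (f.eval η) := by
  rw [veval hvbot hmul hzero]
  exact add_le_add le_rfl
    (Multiset.sum_map_le_sum_map _ _ fun a _ => min_le_vsub hadd hη a)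

lemma M_le_ballInf (hvbot : ∀ a, v a ≠ ⊥) (hmul : ∀ a b, v (a * b) = v a + v b)
    (hadd : ∀ a b, min (v a) (v b) ≤ v (a + b)) (hzero : ∀ a, v a = ⊤ ↔ a = 0)
    (ξ : K) (α : ℝ) (f : K[X]) : M v ξ α f ≤ ballInf v ξ α f := by
  refine le_sInf fun r hr => ?_
  obtain ⟨η, hη, rfl⟩ := hr
  exact M_le_eval hvbot hmul hadd hzero ξ α f hη

lemma M_ne_bot (hvbot : ∀ a, v a ≠ ⊥) (ξ : K) (α : ℝ) {f : K[X]} (hf : f ≠ 0) :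
    M v ξ α f ≠ ⊥ := by
  rw [M]
  intro hc
  rcases EReal.add_eq_bot_iff.1 hc with h1 | h1
  · exact hvbot _ h1
  · refine ereal_sum_ne_bot ?_ h1
    intro x hx
    obtain ⟨a, _, rfl⟩ := Multiset.mem_map.1 hx
    intro hb
    rcases min_eq_iff.1 hb with ⟨h2, _⟩ | ⟨h2, _⟩
    · exact EReal.coe_ne_bot α h2
    · exact hvbot _ h2

lemma M_ne_top (hvbot : ∀ a, v a ≠ ⊥) (hzero : ∀ a, v a = ⊤ ↔ a = 0)
    (ξ : K) (α : ℝ) {f : K[X]} (hf : f ≠ 0) : M v ξ α f ≠ ⊤ := by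
  rw [M]
  have h1 : v f.leadingCoeff ≠ ⊤ := vne_top hzero (leadingCoeff_ne_zero.2 hf)
  have h2 : ((f.roots).map fun a => min (α : EReal) (v (ξ - a))).sum ≠ ⊤ := by
    have hle : ((f.roots).map fun a => min (α : EReal) (v (ξ - a))).sum ≤
        (f.roots).card • (α : EReal) := by
      have := Multiset.sum_le_card_nsmul ((f.roots).map fun a => min (α : EReal) (v (ξ - a)))
        (α : EReal) ?_
      · simpa using this
      · intro x hx
        obtain ⟨a, _, rfl⟩ := Multiset.mem_map.1 hx
        exact min_le_left _ _
    intro hc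
    rw [hc, ← EReal.coe_nsmul] at hle
    exact EReal.coe_ne_top _ (top_le_iff.1 hle)
  exact (EReal.add_lt_top h1 h2).ne

lemma ballInf_zero (hzero : ∀ a, v a = ⊤ ↔ a = 0) (ξ : K) (α : ℝ) :
    ballInf v ξ α (0 : K[X]) = ⊤ := by
  have : {r : EReal | ∃ η : K, (α : EReal) ≤ v (η - ξ) ∧ r = v (Polynomial.eval η 0)} = {⊤} := by
    ext r
    simp only [Set.mem_setOf_eq, Set.mem_singleton_iff, eval_zero, (hzero 0).2 rfl]
    constructor
    · rintro ⟨η, _, rfl⟩; rfl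
    · rintro rfl
      exact ⟨ξ, by simp [(hzero 0).2 rfl], rfl⟩
  rw [ballInf, this, sInf_singleton]

lemma ballInf_le_M (hvbot : ∀ a, v a ≠ ⊥) (hmul : ∀ a b, v (a * b) = v a + v b)
    (hadd : ∀ a b, min (v a) (v b) ≤ v (a + b)) (hzero : ∀ a, v a = ⊤ ↔ a = 0)
    (hdiv : ∀ (a : K) (n : ℕ), 0 < n → ∃ b : K, n • v b = v a)
    (hnt : ∃ x : K, x ≠ 0 ∧ v x ≠ 0) (ξ : K) (α : ℝ) {f : K[X]} (hf : f ≠ 0) :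
    ballInf v ξ α f ≤ M v ξ α f := by
  classical
  obtain ⟨x, hx0, hxv⟩ := hnt
  obtain ⟨μ, hμ⟩ := vreal hvbot hzero hx0
  have hμ0 : μ ≠ 0 := by rintro rfl; exact hxv (by simpa using hμ)
  obtain ⟨x₁, μ₁, hx₁, hμ₁pos⟩ : ∃ (x₁ : K) (μ₁ : ℝ), v x₁ = (μ₁ : EReal) ∧ 0 < μ₁ := by
    rcases hμ0.lt_or_gt with h | h
    · exact ⟨x⁻¹, -μ, vinv hvbot hmul hzero hμ, by linarith⟩
    · exact ⟨x, μ, hμ, h⟩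
  refine ereal_le_of_forall_add (M_ne_bot hvbot ξ α hf) (M_ne_top hvbot hzero ξ α hf) ?_
  intro ε hε
  set n := Multiset.card f.roots with hn
  set e := ε / (n + 1) with he
  have he0 : 0 < e := by positivity
  obtain ⟨m, hm⟩ := exists_nat_gt (μ₁ * (n + 2) / e)
  have hm0 : (0 : ℝ) < m := lt_trans (by positivity) hm
  have hmpos : 0 < m := by exact_mod_cast hm0
  obtain ⟨b, hb⟩ := hdiv x₁ m hmpos
  have hbne : v b ≠ ⊤ := by
    intro h
    rw [h, nsmul_top hmpos, hx₁] at hb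
    exact EReal.coe_ne_top μ₁ hb.symm
  obtain ⟨δ, hδ⟩ := exists_real (hvbot b) hbne
  have hδval : (m : ℝ) * δ = μ₁ := by
    rw [hδ, hx₁] at hb
    rw [← EReal.coe_nsmul] at hb
    have := EReal.coe_eq_coe_iff.1 hb
    simpa [nsmul_eq_mul] using this
  have hδ0 : 0 < δ := by nlinarith
  have hδe : (n + 2 : ℝ) * δ ≤ e := by
    rw [div_lt_iff₀ he0] at hm
    nlinarith
  set k₀ : ℤ := ⌈α / δ⌉ + 1 with hk0
  set F : Finset ℝ := f.roots.toFinset.image (fun a => (v (ξ - a)).toReal) with hF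
  have hFcard : F.card ≤ n := le_trans Finset.card_image_le (f.roots.toFinset_card_le)
  have hpig : ∃ j ∈ Finset.range (n + 1), ((k₀ : ℝ) + j) * δ ∉ F := by
    by_contra hcon
    push_neg at hcon
    have hsub : (Finset.range (n + 1)).image (fun j : ℕ => ((k₀ : ℝ) + j) * δ) ⊆ F :=
      Finset.image_subset_iff.2 hcon
    have hinj : Set.InjOn (fun j : ℕ => ((k₀ : ℝ) + j) * δ) (Finset.range (n + 1)) := by
      intro i _ j _ hij
      simp only at hij
      have h1 : ((k₀ : ℝ) + i) = (k₀ : ℝ) + j := mul_right_cancel₀ hδ0.ne' hij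
      have : (i : ℝ) = j := by linarith
      exact_mod_cast this
    have hcard := Finset.card_le_card hsub
    rw [Finset.card_image_of_injOn hinj, Finset.card_range] at hcard
    omega
  obtain ⟨j, hjr, hjF⟩ := hpig
  have hjn : j ≤ n := by
    have := Finset.mem_range.1 hjr; omega
  set β : ℝ := ((k₀ : ℝ) + j) * δ with hβ
  set t : K := b ^ (k₀ + (j : ℤ)) with ht
  have hvt : v t = (β : EReal) := by
    rw [ht, vzpow hvbot hmul hzero hδ]
    congr 1
    push_cast
    ring
  have hβgt : α < β := by
    have h1 : α / δ < (k₀ : ℝ) := by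
      have := Int.le_ceil (α / δ)
      push_cast [hk0]
      linarith
    rw [div_lt_iff₀ hδ0] at h1
    have hj0 : (0 : ℝ) ≤ (j : ℝ) * δ := by positivity
    rw [hβ]
    nlinarith
  have hβle : β ≤ α + e := by
    have h1 : (k₀ : ℝ) ≤ α / δ + 2 := by
      have := Int.ceil_lt_add_one (α / δ)
      push_cast [hk0]
      linarith
    have hjR : (j : ℝ) ≤ n := by exact_mod_cast hjn
    have h2 : β ≤ (α / δ + 2 + n) * δ := by
      rw [hβ]
      have : (k₀ : ℝ) + j ≤ α / δ + 2 + n := by linarith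
      nlinarith
    have h3 : (α / δ + 2 + n) * δ = α + (n + 2) * δ := by
      field_simp
      ring
    linarith
  set η : K := ξ + t with hη
  have hmem : (α : EReal) ≤ v (η - ξ) := by
    have hηt : η - ξ = t := by rw [hη]; ring
    rw [hηt, hvt]
    exact_mod_cast hβgt.le
  have hroot : ∀ a ∈ f.roots, v (η - a) ≤ min (α : EReal) (v (ξ - a)) + (e : EReal) := by
    intro a ha
    have hsplit : η - a = t + (ξ - a) := by rw [hη]; ring
    by_cases htop : v (ξ - a) = ⊤
    · have hza : ξ - a = 0 := (hzero _).1 htop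
      rw [hsplit, hza, add_zero, hvt, (hzero (0:K)).2 rfl, min_eq_left le_top, ← EReal.coe_add]
      exact_mod_cast hβle
    · obtain ⟨s, hs⟩ := exists_real (hvbot _) htop
      have hsne : β ≠ s := by
        intro hc
        apply hjF
        rw [hF]
        refine Finset.mem_image.2 ⟨a, Multiset.mem_toFinset.2 ha, ?_⟩
        rw [hs, ← hc]
        simp
      have hne : v t ≠ v (ξ - a) := by
        rw [hvt, hs]
        exact_mod_cast hsne
      rw [hsplit, vadd_eq_min hvbot hmul hadd hzero hne, hvt, hs]
      have hmin : min β s ≤ min α s + e := by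
        rcases le_total s α with h | h
        · rw [min_eq_right h]
          have := min_le_right β s
          linarith
        · rw [min_eq_left h]
          have := min_le_left β s
          linarith
      calc min ((β : ℝ) : EReal) ((s : ℝ) : EReal)
          = ((min β s : ℝ) : EReal) := (EReal.coe_strictMono.monotone.map_min).symm
        _ ≤ ((min α s + e : ℝ) : EReal) := EReal.coe_le_coe_iff.2 hmin
        _ = min ((α : ℝ) : EReal) ((s : ℝ) : EReal) + (e : EReal) := by
            rw [EReal.coe_add, EReal.coe_strictMono.monotone.map_min]
  have heval : v (f.eval η) ≤ M v ξ α f + (ε : EReal) := by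
    rw [veval hvbot hmul hzero, M]
    have h1 : ((f.roots).map fun a => v (η - a)).sum ≤
        ((f.roots).map fun a => min (α : EReal) (v (ξ - a)) + (e : EReal)).sum :=
      Multiset.sum_map_le_sum_map _ _ hroot
    have h2 : ((f.roots).map fun a => min (α : EReal) (v (ξ - a)) + (e : EReal)).sum
        = ((f.roots).map fun a => min (α : EReal) (v (ξ - a))).sum + n • (e : EReal) := by
      rw [Multiset.sum_map_add]
      congr 1
      rw [Multiset.map_const', Multiset.sum_replicate]
    have h3 : n • (e : EReal) ≤ (ε : EReal) := by
      rw [← EReal.coe_nsmul]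
      have hne' : (n : ℝ) * e ≤ ε := by
        rw [he, ← mul_div_assoc, div_le_iff₀ (by positivity : (0:ℝ) < (n:ℝ) + 1)]
        nlinarith
      exact EReal.coe_le_coe_iff.2 (by simpa [nsmul_eq_mul] using hne')
    calc v f.leadingCoeff + ((f.roots).map fun a => v (η - a)).sum
        ≤ v f.leadingCoeff + (((f.roots).map fun a => min (α : EReal) (v (ξ - a))).sum
            + n • (e : EReal)) := by
          refine add_le_add le_rfl ?_
          rw [← h2]
          exact h1
      _ ≤ v f.leadingCoeff + (((f.roots).map fun a => min (α : EReal) (v (ξ - a))).sum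
            + (ε : EReal)) := add_le_add le_rfl (add_le_add le_rfl h3)
      _ = v f.leadingCoeff + ((f.roots).map fun a => min (α : EReal) (v (ξ - a))).sum
            + (ε : EReal) := by rw [add_assoc]
  exact le_trans (sInf_le ⟨η, hmem, rfl⟩) heval

lemma M_mul (hvbot : ∀ a, v a ≠ ⊥) (hmul : ∀ a b, v (a * b) = v a + v b)
    (ξ : K) (α : ℝ) {f g : K[X]} (hf : f ≠ 0) (hg : g ≠ 0) :
    M v ξ α (f * g) = M v ξ α f + M v ξ α g := by
  rw [M, M, M, leadingCoeff_mul, hmul, roots_mul (mul_ne_zero hf hg), Multiset.map_add,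
    Multiset.sum_add]
  exact add_add_add_comm _ _ _ _

end Stmt6

/-- Let `K` be an algebraically closed field with a valuation `v : K → ℝ ∪ {∞}` whose value
group is divisible.  For a center `ξ ∈ K` and a radius `α ∈ ℝ`, the Berkovich ball function
`ν(f) = inf {v(f(η)) : η ∈ B}` on `K[X]` is multiplicative: `ν(fg) = ν(f) + ν(g)`. -/
theorem stmt6 (K : Type*) [Field K] [IsAlgClosed K] (v : K → EReal)
    (hvbot : ∀ a, v a ≠ ⊥)
    (hmul : ∀ a b, v (a * b) = v a + v b)
    (hadd : ∀ a b, min (v a) (v b) ≤ v (a + b))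
    (hzero : ∀ a, v a = ⊤ ↔ a = 0)
    (hdiv : ∀ (a : K) (n : ℕ), 0 < n → ∃ b : K, n • v b = v a)
    (ξ : K) (α : ℝ) (f g : Polynomial K) :
    ballInf v ξ α (f * g) = ballInf v ξ α f + ballInf v ξ α g := by
  classical
  have hnebot : ∀ h : Polynomial K, h ≠ 0 → ballInf v ξ α h ≠ ⊥ := by
    intro h hh hc
    have h1 := Stmt6.M_le_ballInf hvbot hmul hadd hzero ξ α h
    rw [hc, le_bot_iff] at h1
    exact Stmt6.M_ne_bot hvbot ξ α hh h1
  by_cases hf : f = 0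
  · subst hf
    rw [zero_mul, Stmt6.ballInf_zero hzero]
    by_cases hg : g = 0
    · subst hg
      rw [Stmt6.ballInf_zero hzero]
      simp
    · exact (EReal.top_add_of_ne_bot (hnebot g hg)).symm
  by_cases hg : g = 0
  · subst hg
    rw [mul_zero, Stmt6.ballInf_zero hzero]
    exact (EReal.add_top_of_ne_bot (hnebot f hf)).symm
  by_cases hnt : ∃ x : K, x ≠ 0 ∧ v x ≠ 0
  · have key : ∀ h : Polynomial K, h ≠ 0 → ballInf v ξ α h = Stmt6.M v ξ α h := fun h hh =>
      le_antisymm (Stmt6.ballInf_le_M hvbot hmul hadd hzero hdiv hnt ξ α hh)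
        (Stmt6.M_le_ballInf hvbot hmul hadd hzero ξ α h)
    rw [key _ (mul_ne_zero hf hg), key f hf, key g hg,
      Stmt6.M_mul hvbot hmul ξ α hf hg]
  · push_neg at hnt
    have htriv : ∀ x : K, x ≠ 0 → v x = 0 := hnt
    by_cases hα : α ≤ 0
    · have key : ∀ h : Polynomial K, h ≠ 0 → ballInf v ξ α h = 0 := by
        intro h hh
        apply le_antisymm
        · obtain ⟨η, hη⟩ := Infinite.exists_notMem_finset h.roots.toFinset
          have hηroot : Polynomial.eval η h ≠ 0 := by
            intro hc
            exact hη (Multiset.mem_toFinset.2 ((Polynomial.mem_roots hh).2 hc))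
          have hmem : (α : EReal) ≤ v (η - ξ) := by
            by_cases hx : η - ξ = 0
            · rw [hx, (hzero 0).2 rfl]; exact le_top
            · rw [htriv _ hx]
              exact_mod_cast hα
          exact sInf_le ⟨η, hmem, (htriv _ hηroot).symm⟩
        · refine le_sInf fun r hr => ?_
          obtain ⟨η, _, rfl⟩ := hr
          by_cases hc : Polynomial.eval η h = 0
          · rw [hc, (hzero 0).2 rfl]; exact le_top
          · rw [htriv _ hc]
      rw [key _ (mul_ne_zero hf hg), key f hf, key g hg]
      simp
    · push_neg at hα
      have hset : ∀ h : Polynomial K,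
          {r : EReal | ∃ η : K, (α : EReal) ≤ v (η - ξ) ∧ r = v (Polynomial.eval η h)} =
            {v (Polynomial.eval ξ h)} := by
        intro h
        ext r
        simp only [Set.mem_setOf_eq, Set.mem_singleton_iff]
        constructor
        · rintro ⟨η, hη, rfl⟩
          have hηξ : η = ξ := by
            by_contra hne
            rw [htriv _ (sub_ne_zero.2 hne)] at hη
            exact absurd (by exact_mod_cast hη : α ≤ (0 : ℝ)) (not_le.2 hα)
          rw [hηξ]
        · rintro rfl
          exact ⟨ξ, by rw [sub_self, (hzero 0).2 rfl]; exact le_top, rfl⟩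
      show sInf _ = sInf _ + sInf _
      rw [hset, hset, hset, sInf_singleton, sInf_singleton, sInf_singleton,
        Polynomial.eval_mul, hmul]
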